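/- arXiv:1212.5006 — 8 statements merged into one kernel-verified Lean document; each statement's English description precedes it below -/
import Mathlib

section
/- Let n ≥ 3 be an integer and let L be the subgroup of (ℚ/ℤ)^4 generated by v = (\frac{n-1}{n(n-2)}, \frac{1}{n(n-2)}, 0, \frac{-1}{n-2}), w = (\frac{1}{n(n-2)}, \frac{n-1}{n(n-2)}, 0, \frac{-1}{n-2}), and u = (\frac{1}{(n-1)(n-2)}, \frac{1}{(n-1)(n-2)}, \frac{1}{n-1}, \frac{-n}{(n-1)(n-2)}). Then the cardinality of L is n(n-1)(n-2). -/
/-- Two rational points of `ℚ/ℤ` are equal when they differ by an integer. -/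
lemma coe_eq_coe_of_sub_int (q r : ℚ) (k : ℤ) (h : q - r = k) :
    ((q : ℚ) : AddCircle (1 : ℚ)) = ((r : ℚ) : AddCircle (1 : ℚ)) := by
  have h0 : ((q - r : ℚ) : AddCircle (1 : ℚ)) = 0 := by
    rw [AddCircle.coe_eq_zero_iff]
    exact ⟨k, by rw [h]; simp⟩
  rwa [AddCircle.coe_sub, sub_eq_zero] at h0

lemma zsmul_coe_eq (k : ℤ) (q r : ℚ) (m : ℤ) (h : (k : ℚ) * q - r = m) :
    k • ((q : ℚ) : AddCircle (1 : ℚ)) = ((r : ℚ) : AddCircle (1 : ℚ)) := by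
  rw [← AddCircle.coe_zsmul]
  exact coe_eq_coe_of_sub_int _ _ m (by rw [zsmul_eq_mul]; exact h)

lemma nsmul_coe_eq_zero (k : ℕ) (q : ℚ) (m : ℤ) (h : (k : ℚ) * q = m) :
    k • ((q : ℚ) : AddCircle (1 : ℚ)) = 0 := by
  rw [← AddCircle.coe_nsmul, AddCircle.coe_eq_zero_iff]
  exact ⟨m, by rw [zsmul_eq_mul, mul_one, nsmul_eq_mul, h]⟩

/-- The subgroup `L ⊆ (ℚ/ℤ)⁴` generated by the vectors `v, w, u` associated to the
Delsarte surface `Xⁿ + Yⁿ + Zⁿ⁻¹U + XYUⁿ⁻²` has exactly `n(n-1)(n-2)` elements. -/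
theorem card_L (n : ℕ) (hn : 3 ≤ n)
    (v w u : Fin 4 → AddCircle (1 : ℚ))
    (hv : v = ![(((n - 1) / (n * (n - 2)) : ℚ) : AddCircle (1 : ℚ)),
      ((1 / (n * (n - 2)) : ℚ) : AddCircle (1 : ℚ)), (((0 : ℚ)) : AddCircle (1 : ℚ)),
      (((-1) / (n - 2) : ℚ) : AddCircle (1 : ℚ))])
    (hw : w = ![((1 / (n * (n - 2)) : ℚ) : AddCircle (1 : ℚ)),
      (((n - 1) / (n * (n - 2)) : ℚ) : AddCircle (1 : ℚ)), (((0 : ℚ)) : AddCircle (1 : ℚ)),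
      (((-1) / (n - 2) : ℚ) : AddCircle (1 : ℚ))])
    (hu : u = ![((1 / ((n - 1) * (n - 2)) : ℚ) : AddCircle (1 : ℚ)),
      ((1 / ((n - 1) * (n - 2)) : ℚ) : AddCircle (1 : ℚ)),
      ((1 / (n - 1) : ℚ) : AddCircle (1 : ℚ)),
      (((-n) / ((n - 1) * (n - 2)) : ℚ) : AddCircle (1 : ℚ))]) :
    Nat.card (AddSubgroup.closure ({v, w, u} : Set (Fin 4 → AddCircle (1 : ℚ)))) =
      n * (n - 1) * (n - 2) := by
  haveI : Fact ((0 : ℚ) < 1) := ⟨zero_lt_one⟩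
  have hx3 : (3 : ℚ) ≤ (n : ℚ) := by exact_mod_cast hn
  set x : ℚ := (n : ℚ) with hxdef
  have hx0 : x ≠ 0 := by intro h; rw [h] at hx3; norm_num at hx3
  have hx1 : x - 1 ≠ 0 := by intro h; have : x = 1 := by linarith
                             rw [this] at hx3; norm_num at hx3
  have hx2 : x - 2 ≠ 0 := by intro h; have : x = 2 := by linarith
                             rw [this] at hx3; norm_num at hx3
  set M : ℕ := n * (n - 1) * (n - 2) with hM
  have h1n : 1 ≤ n := by omega
  have h2n : 2 ≤ n := by omega
  have hMQ : (M : ℚ) = x * (x - 1) * (x - 2) := by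
    rw [hM, Nat.cast_mul, Nat.cast_mul, Nat.cast_sub h1n, Nat.cast_sub h2n]
    push_cast; ring
  have hMpos : 0 < M := by
    rw [hM]; have : 3 ≤ n := hn
    apply Nat.mul_pos (Nat.mul_pos (by omega) (by omega)) (by omega)
  -- the generator g = v - u
  set g : Fin 4 → AddCircle (1 : ℚ) :=
    ![(((x ^ 2 - 3 * x + 1) / (x * (x - 1) * (x - 2)) : ℚ) : AddCircle (1 : ℚ)),
      (((-1) / (x * (x - 1) * (x - 2)) : ℚ) : AddCircle (1 : ℚ)),
      (((-1) / (x - 1) : ℚ) : AddCircle (1 : ℚ)),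
      ((1 / ((x - 1) * (x - 2)) : ℚ) : AddCircle (1 : ℚ))] with hg
  -- g = v - u
  have hgvu : g = v - u := by
    funext i
    fin_cases i <;>
      simp only [hg, hv, hu, Pi.sub_apply, Matrix.cons_val_zero, Matrix.cons_val_one,
        Matrix.head_cons, Matrix.cons_val_two, Matrix.tail_cons, Matrix.cons_val_three,
        Fin.isValue, ← AddCircle.coe_sub] <;>
      exact coe_eq_coe_of_sub_int _ _ 0 (by push_cast; field_simp; try ring)
  -- v, w, u are multiples of g
  have hvmem : v ∈ AddSubgroup.zmultiples g := by
    refine ⟨(1 : ℤ) - (n : ℤ), ?_⟩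
    funext i
    fin_cases i <;>
      simp only [hg, hv, Pi.smul_apply, Matrix.cons_val_zero, Matrix.cons_val_one,
        Matrix.head_cons, Matrix.cons_val_two, Matrix.tail_cons, Matrix.cons_val_three,
        Fin.isValue]
    · exact zsmul_coe_eq _ _ _ (-1) (by push_cast; field_simp; try ring)
    · exact zsmul_coe_eq _ _ _ 0 (by push_cast; field_simp; try ring)
    · exact zsmul_coe_eq _ _ _ 1 (by push_cast; field_simp; try ring)
    · exact zsmul_coe_eq _ _ _ 0 (by push_cast; field_simp; try ring)
  have hwmem : w ∈ AddSubgroup.zmultiples g := by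
    refine ⟨-(((n : ℤ) - 1) ^ 2), ?_⟩
    funext i
    fin_cases i <;>
      simp only [hg, hw, Pi.smul_apply, Matrix.cons_val_zero, Matrix.cons_val_one,
        Matrix.head_cons, Matrix.cons_val_two, Matrix.tail_cons, Matrix.cons_val_three,
        Fin.isValue]
    · exact zsmul_coe_eq _ _ _ (-(n : ℤ) + 2) (by push_cast; field_simp; try ring)
    · exact zsmul_coe_eq _ _ _ 0 (by push_cast; field_simp; try ring)
    · exact zsmul_coe_eq _ _ _ ((n : ℤ) - 1) (by push_cast; field_simp; try ring)
    · exact zsmul_coe_eq _ _ _ (-1) (by push_cast; field_simp; try ring)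
  have humem : u ∈ AddSubgroup.zmultiples g := by
    refine ⟨-(n : ℤ), ?_⟩
    funext i
    fin_cases i <;>
      simp only [hg, hu, Pi.smul_apply, Matrix.cons_val_zero, Matrix.cons_val_one,
        Matrix.head_cons, Matrix.cons_val_two, Matrix.tail_cons, Matrix.cons_val_three,
        Fin.isValue]
    · exact zsmul_coe_eq _ _ _ (-1) (by push_cast; field_simp; try ring)
    · exact zsmul_coe_eq _ _ _ 0 (by push_cast; field_simp; try ring)
    · exact zsmul_coe_eq _ _ _ 1 (by push_cast; field_simp; try ring)
    · exact zsmul_coe_eq _ _ _ 0 (by push_cast; field_simp; try ring)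
  -- the closure equals the cyclic group generated by g
  have hclos : AddSubgroup.closure ({v, w, u} : Set (Fin 4 → AddCircle (1 : ℚ)))
      = AddSubgroup.zmultiples g := by
    apply le_antisymm
    · rw [AddSubgroup.closure_le]
      intro y hy
      rcases hy with rfl | rfl | rfl
      · exact hvmem
      · exact hwmem
      · exact humem
    · rw [AddSubgroup.zmultiples_le]
      rw [hgvu]
      exact sub_mem
        (AddSubgroup.subset_closure (by simp))
        (AddSubgroup.subset_closure (by simp))
  -- order of g divides M
  have hMg : M • g = 0 := by
    funext i
    fin_cases i <;>
      simp only [hg, Pi.smul_apply, Matrix.cons_val_zero, Matrix.cons_val_one,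
        Matrix.head_cons, Matrix.cons_val_two, Matrix.tail_cons, Matrix.cons_val_three,
        Fin.isValue, Pi.zero_apply]
    · exact nsmul_coe_eq_zero _ _ ((n : ℤ) ^ 2 - 3 * n + 1)
        (by rw [hMQ]; push_cast; field_simp; try ring)
    · exact nsmul_coe_eq_zero _ _ (-1) (by rw [hMQ]; push_cast; field_simp)
    · exact nsmul_coe_eq_zero _ _ (-(n : ℤ) * ((n : ℤ) - 2))
        (by rw [hMQ]; push_cast; field_simp; try ring)
    · exact nsmul_coe_eq_zero _ _ (n : ℤ) (by rw [hMQ]; push_cast; field_simp; try ring)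
  -- the second coordinate of g has order exactly M
  have hord1 : addOrderOf (g 1) = M := by
    have hg1 : g 1 = -((((1 : ℕ) : ℚ) / ((M : ℕ) : ℚ) * (1 : ℚ) : ℚ) : AddCircle (1 : ℚ)) := by
      rw [← AddCircle.coe_neg]
      rw [hg]
      simp only [Matrix.cons_val_one, Matrix.head_cons]
      rw [hMQ]
      push_cast
      field_simp
    rw [hg1, addOrderOf_neg]
    exact AddCircle.addOrderOf_div_of_gcd_eq_one hMpos (Nat.gcd_one_left M)
  have hdvd1 : addOrderOf g ∣ M := addOrderOf_dvd_of_nsmul_eq_zero hMg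
  have hdvd2 : M ∣ addOrderOf g := by
    rw [← hord1]
    apply addOrderOf_dvd_of_nsmul_eq_zero
    have := addOrderOf_nsmul_eq_zero g
    calc addOrderOf g • g 1 = (addOrderOf g • g) 1 := rfl
      _ = 0 := by rw [this]; rfl
  have hordg : addOrderOf g = M := Nat.dvd_antisymm hdvd1 hdvd2
  rw [hclos, Nat.card_zmultiples, hordg]
end

section
/- With L as above (n ≥ 3), every element of L can be written uniquely as i·v + k·u with 0 ≤ i < n(n-2) and 0 ≤ k < n-1; that is, the map (i,k) ↦ i·v + k·u from {0,…,n(n-2)-1} × {0,…,n-2} to L is a bijection. -/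
private lemma AC_eq_iff (a b : ℚ) :
    (a : AddCircle (1:ℚ)) = (b : AddCircle (1:ℚ)) ↔ ∃ z : ℤ, a - b = z := by
  rw [show ((a : AddCircle (1:ℚ)) = b) ↔ a - b ∈ AddSubgroup.zmultiples (1:ℚ) from
    QuotientAddGroup.eq_iff_sub_mem]
  constructor
  · rintro ⟨k, hk⟩; exact ⟨k, by simpa using hk.symm⟩
  · rintro ⟨z, hz⟩; exact ⟨z, by simpa using hz.symm⟩

private lemma AC_nsmul (m : ℕ) (q : ℚ) :
    m • ((q : ℚ) : AddCircle (1:ℚ)) = ((m * q : ℚ) : AddCircle (1:ℚ)) := by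
  rw [show ((m * q : ℚ)) = m • q from (nsmul_eq_mul (α := ℚ) m q).symm]; rfl

private lemma AC_zsmul (m : ℤ) (q : ℚ) :
    m • ((q : ℚ) : AddCircle (1:ℚ)) = ((m * q : ℚ) : AddCircle (1:ℚ)) := by
  rw [show ((m * q : ℚ)) = m • q from (zsmul_eq_mul (α := ℚ) q m).symm]; rfl

/-- Every element of the group `L` generated by `v, w, u` is uniquely of the form
`i•v + k•u` with `0 ≤ i < n(n-2)` and `0 ≤ k < n-1`. -/
theorem L_normal_form (n : ℕ) (hn : 3 ≤ n)
    (v w u : Fin 4 → AddCircle (1 : ℚ))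
    (hv : v = ![(((n - 1) / (n * (n - 2)) : ℚ) : AddCircle (1 : ℚ)),
      ((1 / (n * (n - 2)) : ℚ) : AddCircle (1 : ℚ)), (((0 : ℚ)) : AddCircle (1 : ℚ)),
      (((-1) / (n - 2) : ℚ) : AddCircle (1 : ℚ))])
    (hw : w = ![((1 / (n * (n - 2)) : ℚ) : AddCircle (1 : ℚ)),
      (((n - 1) / (n * (n - 2)) : ℚ) : AddCircle (1 : ℚ)), (((0 : ℚ)) : AddCircle (1 : ℚ)),
      (((-1) / (n - 2) : ℚ) : AddCircle (1 : ℚ))])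
    (hu : u = ![((1 / ((n - 1) * (n - 2)) : ℚ) : AddCircle (1 : ℚ)),
      ((1 / ((n - 1) * (n - 2)) : ℚ) : AddCircle (1 : ℚ)),
      ((1 / (n - 1) : ℚ) : AddCircle (1 : ℚ)),
      (((-n) / ((n - 1) * (n - 2)) : ℚ) : AddCircle (1 : ℚ))]) :
    ∀ x ∈ AddSubgroup.closure ({v, w, u} : Set (Fin 4 → AddCircle (1 : ℚ))),
      ∃! p : Fin (n * (n - 2)) × Fin (n - 1), (p.1 : ℕ) • v + (p.2 : ℕ) • u = x := by
  haveI : Fact ((0:ℚ) < 1) := ⟨one_pos⟩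
  have hq3 : (3:ℚ) ≤ (n:ℚ) := by exact_mod_cast hn
  have h0 : (n:ℚ) ≠ 0 := by positivity
  have h1 : (n:ℚ) - 1 ≠ 0 := by intro h; linarith
  have h2 : (n:ℚ) - 2 ≠ 0 := by intro h; linarith
  have c1 : ((n - 1 : ℕ) : ℚ) = (n:ℚ) - 1 := by
    have h : 1 ≤ n := by omega
    push_cast [h]; ring
  have c2 : ((n * (n - 2) : ℕ) : ℚ) = (n:ℚ) * ((n:ℚ) - 2) := by
    have h : 2 ≤ n := by omega
    push_cast [h]; ring
  have hM : 0 < n - 1 := by omega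
  have hN : 0 < n * (n - 2) := Nat.mul_pos (by omega) (by omega)
  -- w = (n-1) • v
  have hwv : w = (n - 1) • v := by
    subst hv hw
    funext j
    fin_cases j <;>
      (simp only [Fin.zero_eta, Fin.mk_one, Fin.reduceFinMk, Pi.smul_apply, Matrix.cons_val_zero,
          Matrix.cons_val_one, Matrix.head_cons, Matrix.cons_val_two, Matrix.tail_cons,
          Matrix.cons_val_three, Fin.isValue, AC_nsmul, c1];
        rw [AC_eq_iff])
    · exact ⟨-1, by field_simp; ring⟩
    · exact ⟨0, by field_simp; simp⟩
    · exact ⟨0, by field_simp; simp⟩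
    · exact ⟨1, by field_simp; ring⟩
  -- (n-1) • u = n • v
  have hrel : (n - 1) • u = n • v := by
    subst hv hu
    funext j
    fin_cases j <;>
      (simp only [Fin.zero_eta, Fin.mk_one, Fin.reduceFinMk, Pi.smul_apply, Matrix.cons_val_zero,
          Matrix.cons_val_one, Matrix.head_cons, Matrix.cons_val_two, Matrix.tail_cons,
          Matrix.cons_val_three, Fin.isValue, AC_nsmul, c1];
        rw [AC_eq_iff])
    · exact ⟨-1, by field_simp; ring⟩
    · exact ⟨0, by field_simp; ring⟩
    · exact ⟨1, by field_simp; simp⟩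
    · exact ⟨0, by field_simp; ring⟩
  -- (n*(n-2)) • v = 0
  have hvN : (n * (n - 2)) • v = 0 := by
    subst hv
    funext j
    fin_cases j <;>
      (simp only [Fin.zero_eta, Fin.mk_one, Fin.reduceFinMk, Pi.smul_apply, Matrix.cons_val_zero,
          Matrix.cons_val_one, Matrix.head_cons, Matrix.cons_val_two, Matrix.tail_cons,
          Matrix.cons_val_three, Fin.isValue, AC_nsmul, c2, Pi.zero_apply];
        rw [show (0 : AddCircle (1:ℚ)) = ((0:ℚ) : AddCircle (1:ℚ)) from rfl, AC_eq_iff])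
    · exact ⟨(n:ℤ) - 1, by push_cast; field_simp; simp⟩
    · exact ⟨1, by field_simp; simp⟩
    · exact ⟨0, by field_simp; simp⟩
    · exact ⟨-n, by push_cast; field_simp; simp⟩
  -- uniqueness of the representation
  have inj : ∀ i i' : Fin (n * (n - 2)), ∀ k k' : Fin (n - 1),
      (i : ℕ) • v + (k : ℕ) • u = (i' : ℕ) • v + (k' : ℕ) • u → i = i' ∧ k = k' := by
    intro i i' k k' h
    have hk : k = k' := by
      have h3 := congrFun h 2
      simp only [Pi.add_apply, Pi.smul_apply, hv, hu, Matrix.cons_val_two, Matrix.tail_cons,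
        Matrix.head_cons, AC_nsmul] at h3
      have h4 : (((k : ℕ) / ((n:ℚ) - 1) : ℚ) : AddCircle (1:ℚ))
          = (((k' : ℕ) / ((n:ℚ) - 1) : ℚ) : AddCircle (1:ℚ)) := by
        rw [show ((k : ℕ) / ((n:ℚ) - 1) : ℚ) = (i : ℕ) * 0 + (k : ℕ) * (1 / ((n:ℚ) - 1)) by
            field_simp; simp,
          show ((k' : ℕ) / ((n:ℚ) - 1) : ℚ) = (i' : ℕ) * 0 + (k' : ℕ) * (1 / ((n:ℚ) - 1)) by
            field_simp; simp]
        exact_mod_cast h3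
      have hmem : ∀ k : Fin (n - 1), ((k : ℕ) / ((n:ℚ) - 1) : ℚ) ∈ Set.Ico (0:ℚ) (0 + 1) := by
        intro k
        constructor
        · exact div_nonneg (by positivity) (by linarith)
        · rw [zero_add, div_lt_one (by linarith)]
          have := k.isLt
          have : ((k : ℕ) : ℚ) < ((n - 1 : ℕ) : ℚ) := by exact_mod_cast this
          rw [c1] at this; linarith
      have := (AddCircle.coe_eq_coe_iff_of_mem_Ico (hmem k) (hmem k')).1 h4
      have : ((k : ℕ) : ℚ) = ((k' : ℕ) : ℚ) := by
        field_simp at this; exact_mod_cast this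
      exact Fin.ext (by exact_mod_cast this)
    subst hk
    have hiv : (i : ℕ) • v = (i' : ℕ) • v := by
      have := add_right_cancel h; exact this
    have h3 := congrFun hiv 1
    simp only [Pi.smul_apply, hv, Matrix.cons_val_one, Matrix.head_cons, AC_nsmul] at h3
    have h4 : (((i : ℕ) / ((n:ℚ) * ((n:ℚ) - 2)) : ℚ) : AddCircle (1:ℚ))
        = (((i' : ℕ) / ((n:ℚ) * ((n:ℚ) - 2)) : ℚ) : AddCircle (1:ℚ)) := by
      rw [show ((i : ℕ) / ((n:ℚ) * ((n:ℚ) - 2)) : ℚ) = (i : ℕ) * (1 / ((n:ℚ) * ((n:ℚ) - 2))) by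
          field_simp,
        show ((i' : ℕ) / ((n:ℚ) * ((n:ℚ) - 2)) : ℚ) = (i' : ℕ) * (1 / ((n:ℚ) * ((n:ℚ) - 2))) by
          field_simp]
      exact_mod_cast h3
    have hd : (0:ℚ) < (n:ℚ) * ((n:ℚ) - 2) := by nlinarith
    have hmem : ∀ i : Fin (n * (n - 2)), ((i : ℕ) / ((n:ℚ) * ((n:ℚ) - 2)) : ℚ) ∈
        Set.Ico (0:ℚ) (0 + 1) := by
      intro i
      constructor
      · exact div_nonneg (by positivity) (by linarith)
      · rw [zero_add, div_lt_one hd]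
        have := i.isLt
        have : ((i : ℕ) : ℚ) < ((n * (n - 2) : ℕ) : ℚ) := by exact_mod_cast this
        rw [c2] at this; linarith
    have := (AddCircle.coe_eq_coe_iff_of_mem_Ico (hmem i) (hmem i')).1 h4
    have : ((i : ℕ) : ℚ) = ((i' : ℕ) : ℚ) := by
      field_simp at this; exact_mod_cast this
    exact ⟨Fin.ext (by exact_mod_cast this), rfl⟩
  -- surjectivity
  intro x hx
  have hclos : x ∈ AddSubgroup.closure ({v, u} : Set (Fin 4 → AddCircle (1:ℚ))) := by
    refine (AddSubgroup.closure_le _).2 ?_ hx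
    rintro y (rfl | rfl | rfl)
    · exact AddSubgroup.subset_closure (by simp)
    · rw [hwv]
      exact AddSubgroup.nsmul_mem _ (AddSubgroup.subset_closure (by simp)) _
    · exact AddSubgroup.subset_closure (by simp)
  obtain ⟨a, b, hab⟩ := AddSubgroup.mem_closure_pair.1 hclos
  -- reduce b modulo n-1
  set M : ℤ := ((n - 1 : ℕ) : ℤ) with hMdef
  set N : ℤ := ((n * (n - 2) : ℕ) : ℤ) with hNdef
  have hMpos : 0 < M := by rw [hMdef]; exact_mod_cast hM
  have hNpos : 0 < N := by rw [hNdef]; exact_mod_cast hN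
  have hbu : b • u = (b % M) • u + ((b / M) * n) • v := by
    have : b • u = (b % M) • u + (b / M) • (M • u) := by
      rw [← mul_zsmul, ← add_zsmul]
      congr 1
      exact (Int.emod_add_ediv_mul b M).symm
    rw [this, hMdef, natCast_zsmul, hrel, ← natCast_zsmul (n := n), ← mul_zsmul]
  have hx2 : (a + (b / M) * n) • v + (b % M) • u = x := by
    rw [← hab, add_zsmul]
    rw [hbu]; abel
  set A : ℤ := a + (b / M) * n with hAdef
  have hAv : A • v = (A % N) • v := by
    have : A • v = (A % N) • v + (A / N) • (N • v) := by
      rw [← mul_zsmul, ← add_zsmul]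
      congr 1
      exact (Int.emod_add_ediv_mul A N).symm
    rw [this, hNdef, natCast_zsmul, hvN, smul_zero, add_zero]
  have hiN : 0 ≤ A % N ∧ A % N < N := ⟨Int.emod_nonneg _ (by omega), Int.emod_lt_of_pos _ hNpos⟩
  have hkM : 0 ≤ b % M ∧ b % M < M := ⟨Int.emod_nonneg _ (by omega), Int.emod_lt_of_pos _ hMpos⟩
  refine ⟨(⟨(A % N).toNat, by omega⟩, ⟨(b % M).toNat, by omega⟩), ?_, ?_⟩
  · show ((A % N).toNat : ℕ) • v + ((b % M).toNat : ℕ) • u = x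
    rw [← natCast_zsmul v, ← natCast_zsmul u, Int.toNat_of_nonneg hiN.1,
      Int.toNat_of_nonneg hkM.1, ← hAv, hx2]
  · rintro ⟨i', k'⟩ hq
    have hp : (((⟨(A % N).toNat, by omega⟩ : Fin (n * (n-2))) : ℕ)) • v
        + (((⟨(b % M).toNat, by omega⟩ : Fin (n-1)) : ℕ)) • u = x := by
      show ((A % N).toNat : ℕ) • v + ((b % M).toNat : ℕ) • u = x
      rw [← natCast_zsmul v, ← natCast_zsmul u, Int.toNat_of_nonneg hiN.1,
        Int.toNat_of_nonneg hkM.1, ← hAv, hx2]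
    obtain ⟨e1, e2⟩ := inj i' ⟨(A % N).toNat, by omega⟩ k' ⟨(b % M).toNat, by omega⟩
      (by rw [hq, ← hp])
    simp only [Prod.mk.injEq]
    exact ⟨e1, e2⟩
end

section
/- With L as above (n ≥ 3), let L_0 = { (x_1,x_2,x_3,x_4) ∈ L : x_i = 0 for some i }. Then #L_0 = n(n-2). -/
private lemma zsmul_coe (k : ℤ) (q : ℚ) :
    k • ((q : AddCircle (1:ℚ))) = ((k * q : ℚ) : AddCircle (1:ℚ)) := by
  rw [← AddCircle.coe_zsmul]; norm_num

private lemma coe_zero_iff (q : ℚ) : ((q:AddCircle (1:ℚ)) = 0) ↔ ∃ k:ℤ, (k:ℚ) = q := by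
  rw [AddCircle.coe_eq_zero_iff]; simp [zsmul_eq_mul]

private lemma coe_eq_coe_iff (q r : ℚ) :
    ((q:AddCircle (1:ℚ)) = (r:AddCircle (1:ℚ))) ↔ ∃ k:ℤ, (k:ℚ) = q - r := by
  rw [← sub_eq_zero, ← AddCircle.coe_sub, coe_zero_iff]

/-- The subset `L₀` of elements of `L` having at least one coordinate equal to `0` in
`ℚ/ℤ` has exactly `n(n-2)` elements. -/
theorem card_L0 (n : ℕ) (hn : 3 ≤ n)
    (v w u : Fin 4 → AddCircle (1 : ℚ))
    (hv : v = ![(((n - 1) / (n * (n - 2)) : ℚ) : AddCircle (1 : ℚ)),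
      ((1 / (n * (n - 2)) : ℚ) : AddCircle (1 : ℚ)), (((0 : ℚ)) : AddCircle (1 : ℚ)),
      (((-1) / (n - 2) : ℚ) : AddCircle (1 : ℚ))])
    (hw : w = ![((1 / (n * (n - 2)) : ℚ) : AddCircle (1 : ℚ)),
      (((n - 1) / (n * (n - 2)) : ℚ) : AddCircle (1 : ℚ)), (((0 : ℚ)) : AddCircle (1 : ℚ)),
      (((-1) / (n - 2) : ℚ) : AddCircle (1 : ℚ))])
    (hu : u = ![((1 / ((n - 1) * (n - 2)) : ℚ) : AddCircle (1 : ℚ)),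
      ((1 / ((n - 1) * (n - 2)) : ℚ) : AddCircle (1 : ℚ)),
      ((1 / (n - 1) : ℚ) : AddCircle (1 : ℚ)),
      (((-n) / ((n - 1) * (n - 2)) : ℚ) : AddCircle (1 : ℚ))]) :
    Nat.card {x : Fin 4 → AddCircle (1 : ℚ) |
      x ∈ AddSubgroup.closure ({v, w, u} : Set (Fin 4 → AddCircle (1 : ℚ))) ∧
      ∃ i, x i = 0} = n * (n - 2) := by
  have h3 : (3:ℚ) ≤ (n:ℚ) := by exact_mod_cast hn
  have hN0 : (n:ℚ) ≠ 0 := by linarith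
  have hN1 : (n:ℚ) - 1 ≠ 0 := by linarith
  have hN2 : (n:ℚ) - 2 ≠ 0 := by linarith
  -- w = (n-1) • v
  have hwv : w = ((n:ℤ) - 1) • v := by
    funext i
    fin_cases i
    · simp only [hv, hw, Pi.smul_apply, Fin.zero_eta, Fin.isValue, Matrix.cons_val_zero]
      rw [zsmul_coe, coe_eq_coe_iff]
      exact ⟨-1, by push_cast; field_simp; ring⟩
    · simp only [hv, hw, Pi.smul_apply, Nat.succ_eq_add_one, Nat.reduceAdd, Fin.mk_one,
        Fin.isValue, Matrix.cons_val_one, Matrix.head_cons, Matrix.cons_val_zero]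
      rw [zsmul_coe, coe_eq_coe_iff]
      exact ⟨0, by push_cast; field_simp; try ring⟩
    · simp only [hv, hw, Pi.smul_apply, Nat.succ_eq_add_one, Nat.reduceAdd, Fin.reduceFinMk,
        Matrix.cons_val_two, Matrix.tail_cons, Matrix.head_cons]
      rw [zsmul_coe, coe_eq_coe_iff]
      exact ⟨0, by push_cast; ring⟩
    · simp only [hv, hw, Pi.smul_apply, Nat.succ_eq_add_one, Nat.reduceAdd, Fin.reduceFinMk,
        Matrix.cons_val_three, Matrix.tail_cons, Matrix.head_cons]
      rw [zsmul_coe, coe_eq_coe_iff]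
      exact ⟨1, by push_cast; field_simp; ring⟩
  -- (n-1) • u = n • v
  have huv : ((n:ℤ) - 1) • u = (n:ℤ) • v := by
    funext i
    fin_cases i
    · simp only [hv, hu, Pi.smul_apply, Fin.zero_eta, Fin.isValue, Matrix.cons_val_zero]
      rw [zsmul_coe, zsmul_coe, coe_eq_coe_iff]
      exact ⟨-1, by push_cast; field_simp; ring⟩
    · simp only [hv, hu, Pi.smul_apply, Nat.succ_eq_add_one, Nat.reduceAdd, Fin.mk_one,
        Fin.isValue, Matrix.cons_val_one, Matrix.head_cons, Matrix.cons_val_zero]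
      rw [zsmul_coe, zsmul_coe, coe_eq_coe_iff]
      exact ⟨0, by push_cast; field_simp; try ring⟩
    · simp only [hv, hu, Pi.smul_apply, Nat.succ_eq_add_one, Nat.reduceAdd, Fin.reduceFinMk,
        Matrix.cons_val_two, Matrix.tail_cons, Matrix.head_cons]
      rw [zsmul_coe, zsmul_coe, coe_eq_coe_iff]
      exact ⟨1, by push_cast; field_simp; try ring⟩
    · simp only [hv, hu, Pi.smul_apply, Nat.succ_eq_add_one, Nat.reduceAdd, Fin.reduceFinMk,
        Matrix.cons_val_three, Matrix.tail_cons, Matrix.head_cons]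
      rw [zsmul_coe, zsmul_coe, coe_eq_coe_iff]
      exact ⟨0, by push_cast; field_simp; ring⟩
  have key : {x : Fin 4 → AddCircle (1:ℚ) | x ∈ AddSubgroup.closure {v, w, u} ∧ ∃ i, x i = 0}
      = (AddSubgroup.zmultiples v : Set (Fin 4 → AddCircle (1:ℚ))) := by
    ext x
    simp only [Set.mem_setOf_eq, SetLike.mem_coe]
    constructor
    · rintro ⟨hx, i, hxi⟩
      have hle : AddSubgroup.closure ({v, w, u} : Set (Fin 4 → AddCircle (1:ℚ))) ≤
          AddSubgroup.zmultiples v ⊔ AddSubgroup.zmultiples u := by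
        rw [AddSubgroup.closure_le]
        rintro y hy
        simp only [Set.mem_insert_iff, Set.mem_singleton_iff] at hy
        rcases hy with rfl | rfl | rfl
        · exact AddSubgroup.mem_sup_left (AddSubgroup.mem_zmultiples y)
        · exact AddSubgroup.mem_sup_left
            (hwv ▸ AddSubgroup.zsmul_mem _ (AddSubgroup.mem_zmultiples v) _)
        · exact AddSubgroup.mem_sup_right (AddSubgroup.mem_zmultiples y)
      obtain ⟨y, hy, z, hz, rfl⟩ := AddSubgroup.mem_sup.mp (hle hx)
      obtain ⟨a, rfl⟩ := AddSubgroup.mem_zmultiples_iff.mp hy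
      obtain ⟨c, rfl⟩ := AddSubgroup.mem_zmultiples_iff.mp hz
      have hdvd : ((n:ℤ) - 1) ∣ c := by
        fin_cases i
        · simp only [hv, hu, Pi.add_apply, Pi.smul_apply, Fin.zero_eta, Fin.isValue,
            Matrix.cons_val_zero] at hxi
          rw [zsmul_coe, zsmul_coe, ← AddCircle.coe_add, coe_zero_iff] at hxi
          obtain ⟨k, hk⟩ := hxi
          have hZ : (a:ℚ) * ((n:ℚ)-1)^2 + c*(n:ℚ) = k*((n:ℚ)*((n:ℚ)-1)*((n:ℚ)-2)) := by
            field_simp at hk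
            apply mul_right_cancel₀ hN2
            linear_combination -((n:ℚ)-2) * hk
          have hZ' : a * ((n:ℤ)-1)^2 + c*(n:ℤ) = k*((n:ℤ)*((n:ℤ)-1)*((n:ℤ)-2)) := by
            exact_mod_cast hZ
          exact ⟨k*(n:ℤ)*((n:ℤ)-2) - a*((n:ℤ)-1) - c, by linear_combination hZ'⟩
        · simp only [hv, hu, Pi.add_apply, Pi.smul_apply, Nat.succ_eq_add_one, Nat.reduceAdd,
            Fin.mk_one, Fin.isValue, Matrix.cons_val_one, Matrix.head_cons, Matrix.cons_val_zero] at hxi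
          rw [zsmul_coe, zsmul_coe, ← AddCircle.coe_add, coe_zero_iff] at hxi
          obtain ⟨k, hk⟩ := hxi
          have hZ : (a:ℚ) * ((n:ℚ)-1) + c*(n:ℚ) = k*((n:ℚ)*((n:ℚ)-1)*((n:ℚ)-2)) := by
            field_simp at hk
            apply mul_right_cancel₀ hN2
            linear_combination -((n:ℚ)-2) * hk
          have hZ' : a * ((n:ℤ)-1) + c*(n:ℤ) = k*((n:ℤ)*((n:ℤ)-1)*((n:ℤ)-2)) := by
            exact_mod_cast hZ
          exact ⟨k*(n:ℤ)*((n:ℤ)-2) - a - c, by linear_combination hZ'⟩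
        · simp only [hv, hu, Pi.add_apply, Pi.smul_apply, Nat.succ_eq_add_one, Nat.reduceAdd,
            Fin.reduceFinMk, Matrix.cons_val_two, Matrix.tail_cons, Matrix.head_cons] at hxi
          rw [zsmul_coe, zsmul_coe, ← AddCircle.coe_add, coe_zero_iff] at hxi
          obtain ⟨k, hk⟩ := hxi
          have hZ : (c:ℚ) = k*((n:ℚ)-1) := by
            field_simp at hk
            linear_combination -hk
          have hZ' : c = k*((n:ℤ)-1) := by exact_mod_cast hZ
          exact ⟨k, by linear_combination hZ'⟩
        · simp only [hv, hu, Pi.add_apply, Pi.smul_apply, Nat.succ_eq_add_one, Nat.reduceAdd,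
            Fin.reduceFinMk, Matrix.cons_val_three, Matrix.tail_cons, Matrix.head_cons] at hxi
          rw [zsmul_coe, zsmul_coe, ← AddCircle.coe_add, coe_zero_iff] at hxi
          obtain ⟨k, hk⟩ := hxi
          have hZ : -(a:ℚ) * ((n:ℚ)-1) - c*(n:ℚ) = k*(((n:ℚ)-1)*((n:ℚ)-2)) := by
            field_simp at hk
            apply mul_right_cancel₀ hN2
            linear_combination -((n:ℚ)-2) * hk
          have hZ' : -a * ((n:ℤ)-1) - c*(n:ℤ) = k*(((n:ℤ)-1)*((n:ℤ)-2)) := by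
            exact_mod_cast hZ
          exact ⟨-a - c - k*((n:ℤ)-2), by linear_combination -hZ'⟩
      obtain ⟨c', rfl⟩ := hdvd
      rw [AddSubgroup.mem_zmultiples_iff]
      refine ⟨a + c' * (n:ℤ), ?_⟩
      rw [mul_comm ((n:ℤ)-1) c', mul_zsmul, huv, ← mul_zsmul, ← add_zsmul]
    · rintro ⟨k, rfl⟩
      refine ⟨AddSubgroup.zsmul_mem _ (AddSubgroup.subset_closure (by simp)) k, ⟨2, ?_⟩⟩
      have hv2 : v 2 = 0 := by
        simp only [hv, Matrix.cons_val_two, Matrix.tail_cons, Matrix.head_cons]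
        exact (coe_zero_iff 0).mpr ⟨0, by norm_num⟩
      simp [hv2]
  rw [key, SetLike.coe_sort_coe, Nat.card_zmultiples]
  have hcast : ((n * (n-2) : ℕ) : ℚ) = (n:ℚ) * ((n:ℚ) - 2) := by
    push_cast [Nat.cast_sub (by omega : 2 ≤ n)]; ring
  apply Nat.dvd_antisymm
  · apply addOrderOf_dvd_of_nsmul_eq_zero
    funext i
    fin_cases i
    · simp only [hv, Pi.smul_apply, Fin.zero_eta, Fin.isValue, Matrix.cons_val_zero,
        Pi.zero_apply]
      rw [← AddCircle.coe_nsmul, nsmul_eq_mul, coe_zero_iff]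
      exact ⟨(n:ℤ)-1, by rw [hcast]; push_cast; field_simp; try ring⟩
    · simp only [hv, Pi.smul_apply, Nat.succ_eq_add_one, Nat.reduceAdd, Fin.mk_one,
        Fin.isValue, Matrix.cons_val_one, Matrix.head_cons, Pi.zero_apply, Matrix.cons_val_zero]
      rw [← AddCircle.coe_nsmul, nsmul_eq_mul, coe_zero_iff]
      exact ⟨1, by rw [hcast]; push_cast; field_simp⟩
    · simp only [hv, Pi.smul_apply, Nat.succ_eq_add_one, Nat.reduceAdd, Fin.reduceFinMk,
        Matrix.cons_val_two, Matrix.tail_cons, Matrix.head_cons, Pi.zero_apply]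
      rw [← AddCircle.coe_nsmul, nsmul_eq_mul, coe_zero_iff]
      exact ⟨0, by push_cast; ring⟩
    · simp only [hv, Pi.smul_apply, Nat.succ_eq_add_one, Nat.reduceAdd, Fin.reduceFinMk,
        Matrix.cons_val_three, Matrix.tail_cons, Matrix.head_cons, Pi.zero_apply]
      rw [← AddCircle.coe_nsmul, nsmul_eq_mul, coe_zero_iff]
      exact ⟨-(n:ℤ), by rw [hcast]; push_cast; field_simp; try ring⟩
  · have hsm : addOrderOf v • v = 0 := addOrderOf_nsmul_eq_zero v
    obtain ⟨m, hm⟩ : ∃ m, addOrderOf v = m := ⟨_, rfl⟩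
    rw [hm] at hsm ⊢
    have h1' := congrFun hsm 1
    simp only [hv, Pi.smul_apply, Matrix.cons_val_one, Matrix.head_cons, Fin.isValue,
      Pi.zero_apply, Matrix.cons_val_zero] at h1'
    rw [← AddCircle.coe_nsmul, nsmul_eq_mul, coe_zero_iff] at h1'
    obtain ⟨k, hk⟩ := h1'
    have hZ : ((m : ℚ)) = k * ((n:ℚ)*((n:ℚ)-2)) := by
      field_simp at hk
      linear_combination -hk
    have hZ' : (m : ℤ) = k * ((n:ℤ)*((n:ℤ)-2)) := by exact_mod_cast hZ
    have hd : ((n * (n-2) : ℕ) : ℤ) ∣ (m : ℤ) := by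
      refine ⟨k, ?_⟩
      rw [hZ']
      push_cast [Nat.cast_sub (by omega : 2 ≤ n)]
      ring
    exact_mod_cast hd
end

section
/- Let n ≥ 3 and consider a ∈ ℚ/ℤ. The vector (k,l,m) = (a, 1/2 + a, 1/2 + 2a) · B, where B is the integer matrix with rows (n-1,-1,0), (-1,n-1,0), (-1,-1,n-1), has all entries in ℤ if and only if either (a = 1/4 or a = 3/4, and n ≡ 0 mod 4) or (a ∈ {1/12, 5/12, 7/12, 11/12} and n ≡ 4 mod 12). -/
/-- Integrality of `(a, 1/2 + a, 1/2 + 2a) · B` for `B` with rows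
`(n-1,-1,0), (-1,n-1,0), (-1,-1,n-1)`, classified. -/
theorem regular_vector_case1 (n : ℕ) (hn : 3 ≤ n) (a : ℚ) (h0 : 0 ≤ a) (h1 : a < 1) :
    ((∃ k : ℤ, (k : ℚ) = (n - 1) * a - (1/2 + a) - (1/2 + 2*a)) ∧
     (∃ l : ℤ, (l : ℚ) = -a + (n - 1) * (1/2 + a) - (1/2 + 2*a)) ∧
     (∃ m : ℤ, (m : ℚ) = (n - 1) * (1/2 + 2*a))) ↔
    (((a = 1/4 ∨ a = 3/4) ∧ n % 4 = 0) ∨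
     ((a = 1/12 ∨ a = 5/12 ∨ a = 7/12 ∨ a = 11/12) ∧ n % 12 = 4)) := by
  constructor
  · rintro ⟨⟨k, hk⟩, ⟨l, hl⟩, ⟨m, hm⟩⟩
    have ht : ((2*m - 4*k - (n:ℤ) - 3 : ℤ) : ℚ) = 12 * a := by
      push_cast; linear_combination 2*hm - 4*hk
    set t : ℤ := 2*m - 4*k - (n:ℤ) - 3 with htdef
    have ht0 : 0 ≤ t := by
      have : (0:ℚ) ≤ (t:ℚ) := by rw [ht]; linarith
      exact_mod_cast this
    have ht12 : t < 12 := by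
      have : (t:ℚ) < 12 := by rw [ht]; linarith
      exact_mod_cast this
    have hK : 12*k = ((n:ℤ) - 4)*t - 12 := by
      have : ((12*k : ℤ) : ℚ) = ((((n:ℤ) - 4)*t - 12 : ℤ) : ℚ) := by
        push_cast; linear_combination 12*hk - ((n:ℚ) - 4)*ht
      exact_mod_cast this
    have hL : 12*l = ((n:ℤ) - 4)*t + 6*(n:ℤ) - 12 := by
      have : ((12*l : ℤ) : ℚ) = ((((n:ℤ) - 4)*t + 6*(n:ℤ) - 12 : ℤ) : ℚ) := by
        push_cast; linear_combination 12*hl - ((n:ℚ) - 4)*ht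
      exact_mod_cast this
    have hM : 6*m = ((n:ℤ) - 1)*(t + 3) := by
      have : ((6*m : ℤ) : ℚ) = ((((n:ℤ) - 1)*(t + 3) : ℤ) : ℚ) := by
        push_cast; linear_combination 6*hm - ((n:ℚ) - 1)*ht
      exact_mod_cast this
    have hn' : 3 ≤ (n:ℤ) := by exact_mod_cast hn
    clear hk hl hm htdef
    interval_cases t
    · exfalso; omega
    · exact Or.inr ⟨Or.inl (by push_cast at ht; linarith), by omega⟩
    · exfalso; omega
    · exact Or.inl ⟨Or.inl (by push_cast at ht; linarith), by omega⟩
    · exfalso; omega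
    · exact Or.inr ⟨Or.inr (Or.inl (by push_cast at ht; linarith)), by omega⟩
    · exfalso; omega
    · exact Or.inr ⟨Or.inr (Or.inr (Or.inl (by push_cast at ht; linarith))), by omega⟩
    · exfalso; omega
    · exact Or.inl ⟨Or.inr (by push_cast at ht; linarith), by omega⟩
    · exfalso; omega
    · exact Or.inr ⟨Or.inr (Or.inr (Or.inr (by push_cast at ht; linarith))), by omega⟩
  · rintro (⟨(rfl | rfl), h4⟩ | ⟨(rfl | rfl | rfl | rfl), h12⟩)
    · obtain ⟨j, rfl⟩ : ∃ j, n = 4*j := ⟨n/4, by omega⟩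
      exact ⟨⟨(j:ℤ) - 2, by push_cast; ring⟩, ⟨3*(j:ℤ) - 2, by push_cast; ring⟩,
        ⟨4*(j:ℤ) - 1, by push_cast; ring⟩⟩
    · obtain ⟨j, rfl⟩ : ∃ j, n = 4*j := ⟨n/4, by omega⟩
      exact ⟨⟨3*(j:ℤ) - 4, by push_cast; ring⟩, ⟨5*(j:ℤ) - 4, by push_cast; ring⟩,
        ⟨8*(j:ℤ) - 2, by push_cast; ring⟩⟩
    · obtain ⟨j, rfl⟩ : ∃ j, n = 12*j + 4 := ⟨n/12, by omega⟩
      exact ⟨⟨(j:ℤ) - 1, by push_cast; ring⟩, ⟨7*(j:ℤ) + 1, by push_cast; ring⟩,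
        ⟨8*(j:ℤ) + 2, by push_cast; ring⟩⟩
    · obtain ⟨j, rfl⟩ : ∃ j, n = 12*j + 4 := ⟨n/12, by omega⟩
      exact ⟨⟨5*(j:ℤ) - 1, by push_cast; ring⟩, ⟨11*(j:ℤ) + 1, by push_cast; ring⟩,
        ⟨16*(j:ℤ) + 4, by push_cast; ring⟩⟩
    · obtain ⟨j, rfl⟩ : ∃ j, n = 12*j + 4 := ⟨n/12, by omega⟩
      exact ⟨⟨7*(j:ℤ) - 1, by push_cast; ring⟩, ⟨13*(j:ℤ) + 1, by push_cast; ring⟩,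
        ⟨20*(j:ℤ) + 5, by push_cast; ring⟩⟩
    · obtain ⟨j, rfl⟩ : ∃ j, n = 12*j + 4 := ⟨n/12, by omega⟩
      exact ⟨⟨11*(j:ℤ) - 1, by push_cast; ring⟩, ⟨17*(j:ℤ) + 1, by push_cast; ring⟩,
        ⟨28*(j:ℤ) + 7, by push_cast; ring⟩⟩
end

section
/- Let n ≥ 3 and let B be the integer matrix with rows (n-1,-1,0), (-1,n-1,0), (-1,-1,n-1). The vector (a, 1/3 + a, 2/3 + a) · B has all entries in ℤ for a rational a ∈ [0,1) if and only if (a = 1/3 and n ≡ 0 mod 3) or (a = 5/6 and n ≡ 3 mod 6). -/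
/-- Integrality of `(a, 1/3 + a, 2/3 + a) · B` for `B` with rows
`(n-1,-1,0), (-1,n-1,0), (-1,-1,n-1)`, classified. -/
theorem regular_vector_case2 (n : ℕ) (hn : 3 ≤ n) (a : ℚ) (h0 : 0 ≤ a) (h1 : a < 1) :
    ((∃ k : ℤ, (k : ℚ) = (n - 1) * a - (1/3 + a) - (2/3 + a)) ∧
     (∃ l : ℤ, (l : ℚ) = -a + (n - 1) * (1/3 + a) - (2/3 + a)) ∧
     (∃ m : ℤ, (m : ℚ) = (n - 1) * (2/3 + a))) ↔
    ((a = 1/3 ∧ n % 3 = 0) ∨ (a = 5/6 ∧ n % 6 = 3)) := by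
  constructor
  · rintro ⟨⟨k, hk⟩, ⟨l, hl⟩, ⟨m, hm⟩⟩
    push_cast at hk hl hm
    ring_nf at hk hl hm
    -- n = 3*(l-k)
    have h3 : ((n : ℤ) : ℚ) = 3 * ((l : ℚ) - k) := by push_cast; linarith
    have h3' : (n : ℤ) = 3 * (l - k) := by exact_mod_cast h3
    -- c := m + k - 2*l equals 2a + 1/3
    have hc : ((m + k - 2 * l : ℤ) : ℚ) = 2 * a + 1/3 := by push_cast; linarith
    set c : ℤ := m + k - 2 * l with hcdef
    have hc1 : (0 : ℚ) < (c : ℚ) := by rw [hc]; linarith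
    have hc2 : ((c : ℚ)) < 3 := by rw [hc]; linarith
    have hc1' : 1 ≤ c := by exact_mod_cast hc1
    have hc2' : c ≤ 2 := by
      have : (c : ℤ) < 3 := by exact_mod_cast hc2
      omega
    have hcases : c = 1 ∨ c = 2 := by omega
    rcases hcases with h | h
    · left
      have ha : a = 1/3 := by
        have : ((1 : ℤ) : ℚ) = 2 * a + 1/3 := by rw [← h]; exact hc
        push_cast at this; linarith
      refine ⟨ha, ?_⟩
      subst ha
      -- from hk : k = (n-3)/3 - 1, i.e. 3k = n - 6
      have hk3 : (3 * k : ℤ) = (n : ℤ) - 6 := by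
        have : (3 * (k : ℚ)) = (n : ℚ) - 6 := by push_cast; linarith
        exact_mod_cast this
      omega
    · right
      have ha : a = 5/6 := by
        have : ((2 : ℤ) : ℚ) = 2 * a + 1/3 := by rw [← h]; exact hc
        push_cast at this; linarith
      refine ⟨ha, ?_⟩
      subst ha
      -- from hk : k = 5(n-3)/6 - 1, i.e. 6k = 5n - 21
      have hk6 : (6 * k : ℤ) = 5 * (n : ℤ) - 21 := by
        have : (6 * (k : ℚ)) = 5 * (n : ℚ) - 21 := by push_cast; linarith
        exact_mod_cast this
      omega
  · rintro (⟨rfl, hn3⟩ | ⟨rfl, hn6⟩)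
    · obtain ⟨t, rfl⟩ : ∃ t, n = 3 * t := ⟨n / 3, by omega⟩
      refine ⟨⟨(t : ℤ) - 2, ?_⟩, ⟨2 * (t : ℤ) - 2, ?_⟩, ⟨3 * (t : ℤ) - 1, ?_⟩⟩ <;>
        push_cast <;> ring
    · obtain ⟨t, rfl⟩ : ∃ t, n = 6 * t + 3 := ⟨n / 6, by omega⟩
      refine ⟨⟨5 * (t : ℤ) - 1, ?_⟩, ⟨7 * (t : ℤ), ?_⟩, ⟨9 * (t : ℤ) + 3, ?_⟩⟩ <;>
        push_cast <;> ring
end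

section
/- Let n ≥ 3 and let B be the integer matrix with rows (n-1, 0, -1), (-1, n-1, -1), (-1, 0, n-1). The vector (a, 1/2 + a, 1/2 + 2a) · B has all entries in ℤ for rational a ∈ [0,1) if and only if a = 1/2 and n is even. -/
/-- Integrality of `(a, 1/2 + a, 1/2 + 2a) · B` for `B` with rows
`(n-1,0,-1), (-1,n-1,-1), (-1,0,n-1)`, classified. -/
theorem permuted_vector_case (n : ℕ) (hn : 3 ≤ n) (a : ℚ) (h0 : 0 ≤ a) (h1 : a < 1) :
    ((∃ k : ℤ, (k : ℚ) = (n - 1) * a - (1/2 + a) - (1/2 + 2*a)) ∧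
     (∃ l : ℤ, (l : ℚ) = (n - 1) * (1/2 + a)) ∧
     (∃ m : ℤ, (m : ℚ) = -a - (1/2 + a) + (n - 1) * (1/2 + 2*a))) ↔
    (a = 1/2 ∧ Even n) := by
  constructor
  · rintro ⟨⟨k, hk⟩, ⟨l, hl⟩, ⟨m, hm⟩⟩
    have hj : ((m - k - l : ℤ) : ℚ) = a + 1/2 := by push_cast; rw [hk, hl, hm]; ring
    have hj0 : (0:ℤ) < m - k - l := by
      have : (0:ℚ) < ((m - k - l : ℤ) : ℚ) := by rw [hj]; linarith
      exact_mod_cast this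
    have hj2 : (m - k - l : ℤ) < 2 := by
      have : ((m - k - l : ℤ) : ℚ) < 2 := by rw [hj]; linarith
      exact_mod_cast this
    have hj1 : (m - k - l : ℤ) = 1 := by omega
    have ha : a = 1/2 := by rw [hj1] at hj; push_cast at hj; linarith
    refine ⟨ha, ?_⟩
    subst ha
    have h2k : ((2*k + 6 : ℤ) : ℚ) = (n : ℚ) := by push_cast; linarith [hk]
    have h2k' : (2*k + 6 : ℤ) = (n : ℤ) := by exact_mod_cast h2k
    have hev : Even ((n : ℤ)) := by rw [← h2k']; exact ⟨k + 3, by ring⟩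
    exact Int.even_coe_nat n |>.mp hev
  · rintro ⟨ha, t, ht⟩
    subst ha; subst ht
    refine ⟨⟨(t:ℤ) - 3, ?_⟩, ⟨(t:ℤ) + t - 1, ?_⟩, ⟨3*(t:ℤ) - 3, ?_⟩⟩ <;> push_cast <;> ring
end

section
/- Let n ≥ 3 and let B be the integer matrix with rows (n, 0, 0), (0, n-1, 1), (1, 0, n-2). Then there is no rational a ∈ [0,1) such that all entries of (a, 1/2 + a, 1/2 + 2a) · B are integers. -/
/-- For `B` with rows `(n,0,0), (0,n-1,1), (1,0,n-2)`, the vector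
`(a, 1/2 + a, 1/2 + 2a) · B` is never integral. -/
theorem permuted_vector_no_solution (n : ℕ) (hn : 3 ≤ n) :
    ¬ ∃ a : ℚ, 0 ≤ a ∧ a < 1 ∧
      (∃ k : ℤ, (k : ℚ) = n * a + (1/2 + 2*a)) ∧
      (∃ l : ℤ, (l : ℚ) = (n - 1) * (1/2 + a)) ∧
      (∃ m : ℤ, (m : ℚ) = (1/2 + a) + (n - 2) * (1/2 + 2*a)) := by
  rintro ⟨a, ha0, ha1, ⟨k, hk⟩, ⟨l, hl⟩, ⟨m, hm⟩⟩
  -- show 2a is the integer s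
  have hs : ((4*l - 2*m - (n:ℤ) + 1 : ℤ) : ℚ) = 2 * a := by
    push_cast
    rw [hl, hm]; ring
  set s : ℤ := 4*l - 2*m - (n:ℤ) + 1 with hsdef
  have h0 : (0:ℚ) ≤ (s:ℚ) := by rw [hs]; linarith
  have h2 : (s:ℚ) < 2 := by rw [hs]; linarith
  have hs0 : (0:ℤ) ≤ s := by exact_mod_cast h0
  have hs2 : s < 2 := by exact_mod_cast h2
  interval_cases s
  · -- a = 0
    have ha : a = 0 := by
      have := hs; push_cast at this; linarith
    have hk2 : ((2*k : ℤ) : ℚ) = 1 := by push_cast; rw [hk, ha]; ring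
    have : (2*k : ℤ) = 1 := by exact_mod_cast hk2
    omega
  · -- a = 1/2
    have ha : a = 1/2 := by
      have := hs; push_cast at this; linarith
    have hkm : ((2*(k+m) : ℤ) : ℚ) = 4*(n:ℚ) - 1 := by
      push_cast; rw [hk, hm, ha]; ring
    have : (2*(k+m) : ℤ) = 4*(n:ℤ) - 1 := by exact_mod_cast hkm
    omega
end

section
/- Let n ≥ 6 and consider the surface S: X^{n-2}M_x + Y^{n-2}M_y + Z^{n-2}M_z + U^{n-2}M_u = 0 with M_x ∈ {X^2, XU} and M_u ∈ {U^2, XU}. Then every point of the form P = (η : 0 : 0 : 1) on S with η ≠ 0 is a nonsingular point of S. -/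
open MvPolynomial

lemma eval_pderiv_sq_mul (v : Fin 4 → ℂ) (i j : Fin 4) (hvi : v i = 0)
    (g : MvPolynomial (Fin 4) ℂ) :
    eval v (pderiv j (X i ^ 2 * g)) = 0 := by
  simp [pderiv_mul, hvi, pderiv_pow]

/-- If `Mx ∈ {X², XU}` and `Mu ∈ {U², XU}`, then every point `(η : 0 : 0 : 1)` with
`η ≠ 0` lying on the surface `F = Xⁿ⁻²Mx + Yⁿ⁻²My + Zⁿ⁻²Mz + Uⁿ⁻²Mu` is a
nonsingular point of the surface. -/
theorem point_eta_nonsingular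
    (n : ℕ) (hn : 6 ≤ n)
    (Mx My Mz Mu : MvPolynomial (Fin 4) ℂ)
    (hMx : Mx = X 0 ^ 2 ∨ Mx = X 0 * X 3)
    (hMu : Mu = X 3 ^ 2 ∨ Mu = X 0 * X 3)
    (hMy : ∃ d : Fin 4 →₀ ℕ, My = monomial d 1 ∧ d.sum (fun _ k => k) = 2)
    (hMz : ∃ d : Fin 4 →₀ ℕ, Mz = monomial d 1 ∧ d.sum (fun _ k => k) = 2)
    (F : MvPolynomial (Fin 4) ℂ)
    (hF : F = X 0 ^ (n - 2) * Mx + X 1 ^ (n - 2) * My + X 2 ^ (n - 2) * Mz +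
      X 3 ^ (n - 2) * Mu)
    (η : ℂ) (hη : η ≠ 0)
    (honS : eval ![η, 0, 0, 1] F = 0) :
    ∃ j, eval ![η, 0, 0, 1] (pderiv j F) ≠ 0 := by
  obtain ⟨k, rfl⟩ : ∃ k, n = k + 6 := ⟨n - 6, by omega⟩
  have h2 : k + 6 - 2 = k + 4 := by omega
  set v : Fin 4 → ℂ := ![η, 0, 0, 1] with hv
  have hv1 : v 1 = 0 := rfl
  have hv2 : v 2 = 0 := rfl
  have hy : ∀ j, eval v (pderiv j (X 1 ^ (k + 4) * My)) = 0 := by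
    intro j
    have h : (X 1 : MvPolynomial (Fin 4) ℂ) ^ (k + 4) * My
        = X 1 ^ 2 * (X 1 ^ (k + 2) * My) := by ring
    rw [h, eval_pderiv_sq_mul v 1 j hv1]
  have hz : ∀ j, eval v (pderiv j (X 2 ^ (k + 4) * Mz)) = 0 := by
    intro j
    have h : (X 2 : MvPolynomial (Fin 4) ℂ) ^ (k + 4) * Mz
        = X 2 ^ 2 * (X 2 ^ (k + 2) * Mz) := by ring
    rw [h, eval_pderiv_sq_mul v 2 j hv2]
  have hvv0 : v 0 = η := rfl
  have hvv3 : v 3 = 1 := rfl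
  have hyv : eval v (X 1 ^ (k + 4) * My) = 0 := by simp [hv1, pow_succ]
  have hzv : eval v (X 2 ^ (k + 4) * Mz) = 0 := by simp [hv2, pow_succ]
  rcases hMx with rfl | rfl <;> rcases hMu with rfl | rfl
  · refine ⟨0, ?_⟩
    rw [hF, h2]
    simp only [map_add, hy, hz]
    simp only [pderiv_mul, pderiv_pow, hv, map_add, map_mul, map_pow, eval_X,
      Matrix.cons_val_zero, Matrix.cons_val_three, Matrix.cons_val_fin_one]
    simp [pderiv_mul, pderiv_pow, hvv0, hvv3]
    intro h
    have hc : ((k : ℂ) + 6) ≠ 0 := by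
      exact_mod_cast (show ((k+6:ℕ):ℂ) ≠ 0 by exact_mod_cast (by omega : k+6 ≠ 0))
    exact mul_ne_zero hc (pow_ne_zero (k+5) hη) (by linear_combination h)
  · refine ⟨3, ?_⟩
    rw [hF, h2]
    simp only [map_add, hy, hz]
    simp [pderiv_mul, pderiv_pow, hvv0, hvv3]
    intro h
    have hc : ((k : ℂ) + 5) ≠ 0 := by
      exact_mod_cast (show ((k+5:ℕ):ℂ) ≠ 0 by exact_mod_cast (by omega : k+5 ≠ 0))
    exact mul_ne_zero hc hη (by linear_combination h)
  · refine ⟨0, ?_⟩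
    rw [hF, h2]
    simp only [map_add, hy, hz]
    simp [pderiv_mul, pderiv_pow, hvv0, hvv3]
    intro h
    have hc : ((k : ℂ) + 5) ≠ 0 := by
      exact_mod_cast (show ((k+5:ℕ):ℂ) ≠ 0 by exact_mod_cast (by omega : k+5 ≠ 0))
    exact mul_ne_zero hc (pow_ne_zero (k+4) hη) (by linear_combination h)
  · refine ⟨0, ?_⟩
    rw [hF, h2] at honS ⊢
    simp only [map_add, hyv, hzv, map_mul, map_pow, eval_X] at honS
    rw [hvv0, hvv3] at honS
    have heta : η ^ (k + 4) = -1 := by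
      have hm : η * (η ^ (k + 4) + 1) = 0 := by linear_combination honS
      rcases mul_eq_zero.mp hm with h | h
      · exact absurd h hη
      · linear_combination h
    simp only [map_add, hy, hz]
    simp [pderiv_mul, pderiv_pow, hvv0, hvv3]
    intro h
    have hc : ((k : ℂ) + 4) ≠ 0 := by
      exact_mod_cast (show ((k+4:ℕ):ℂ) ≠ 0 by exact_mod_cast (by omega : k+4 ≠ 0))
    exact hc (by linear_combination -h + ((k:ℂ)+5) * heta)
end
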